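/- Let M₀ be an admissible lattice in N₀ with M₀ ≠ τ(M₀) such that both M₀ + τ(M₀) and M₀ ∩ τ(M₀) are τ-stable, and set T₀ = M₀ + τ(M₀) (so M₀ ⊂¹ T₀ ⊂¹ M₀^∨). Then for every lattice S₀ with pM₀^∨ ⊂¹ S₀ ⊂¹ M₀, the pair (S₀, T₀) is a web pair for M₀. -/

import Mathlib

noncomputable section

namespace QURZ

variable {W₀ : Type*} [CommRing W₀]

/-- The length of `B / A`: the Krull dimension of the interval `[A, B]`
in the lattice of submodules. -/
noncomputable def relLength {M : Type*} [AddCommGroup M] [Module W₀ M]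
    (A B : Submodule W₀ M) : WithBot ℕ∞ :=
  Order.krullDim (Set.Icc A B)

/-- `SubIdx A B d` means `A ⊆ B` and the quotient `B/A` has length `d`
(written `A ⊂^d B` in the paper). -/
def SubIdx {M : Type*} [AddCommGroup M] [Module W₀ M]
    (A B : Submodule W₀ M) (d : ℕ) : Prop :=
  A ≤ B ∧ relLength A B = ((d : ℕ∞) : WithBot ℕ∞)

/-- The image `c • A` of a submodule `A` under scalar multiplication by `c`. -/
def smulLat {M : Type*} [AddCommGroup M] [Module W₀ M] (c : W₀) (A : Submodule W₀ M) :
    Submodule W₀ M where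
  carrier := {x | ∃ m ∈ A, c • m = x}
  zero_mem' := ⟨0, A.zero_mem, smul_zero c⟩
  add_mem' := by
    rintro a b ⟨m, hm, rfl⟩ ⟨n, hn, rfl⟩
    exact ⟨m + n, A.add_mem hm hn, smul_add c m n⟩
  smul_mem' := by
    rintro d x ⟨m, hm, rfl⟩
    exact ⟨d • m, A.smul_mem d hm, by rw [smul_smul, smul_smul, mul_comm]⟩

/-- The image of a submodule under a `σ₀`-semilinear map, where `σ₀` is a ring
automorphism. -/
def mapLat {M M' : Type*} [AddCommGroup M] [Module W₀ M] [AddCommGroup M'] [Module W₀ M']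
    {σ₀ : W₀ ≃+* W₀} (g : M →ₛₗ[(σ₀ : W₀ →+* W₀)] M') (A : Submodule W₀ M) :
    Submodule W₀ M' where
  carrier := g '' A
  zero_mem' := ⟨0, A.zero_mem, map_zero g⟩
  add_mem' := by
    rintro a b ⟨m, hm, rfl⟩ ⟨n, hn, rfl⟩
    exact ⟨m + n, A.add_mem hm hn, map_add g m n⟩
  smul_mem' := by
    rintro c x ⟨m, hm, rfl⟩
    refine ⟨σ₀.symm c • m, A.smul_mem _ hm, ?_⟩
    rw [map_smulₛₗ]
    simp

variable {K₀ : Type*} [Field K₀] [Algebra W₀ K₀]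
variable {N₀ : Type*} [AddCommGroup N₀] [Module K₀ N₀] [Module W₀ N₀] [IsScalarTower W₀ K₀ N₀]

/-- A lattice: a finitely generated `W₀`-submodule spanning the ambient space over `K₀`. -/
def IsLattice (A : Submodule W₀ N₀) : Prop :=
  A.FG ∧ Submodule.span K₀ (A : Set N₀) = ⊤

/-- The dual lattice with respect to a bilinear form, consisting of the vectors
pairing into `W₀` with all elements of `A`. -/
def dualLat (form : N₀ →ₗ[K₀] N₀ →ₗ[K₀] K₀) (A : Submodule W₀ N₀) : Submodule W₀ N₀ where
  carrier := {x | ∀ y ∈ A, form x y ∈ (algebraMap W₀ K₀).range}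
  zero_mem' := fun y _ => by rw [map_zero, LinearMap.zero_apply]; exact zero_mem _
  add_mem' := by
    intro a b ha hb y hy
    rw [map_add, LinearMap.add_apply]
    exact add_mem (ha y hy) (hb y hy)
  smul_mem' := by
    intro c x hx y hy
    rw [← IsScalarTower.algebraMap_smul K₀ c x, map_smul, LinearMap.smul_apply, smul_eq_mul]
    exact mul_mem (RingHom.mem_range_self _ c) (hx y hy)

/-- An admissible lattice: `p M₀^∨ ⊆ M₀ ⊂² M₀^∨` and `p τ(M₀^∨) ⊆ M₀ ⊂² τ(M₀^∨)`.
These are the `𝔽`-points of the reduced quaternionic unitary Rapoport–Zink space `ℳ`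
with paramodular level. -/
def IsAdmissible (p : ℕ) (form : N₀ →ₗ[K₀] N₀ →ₗ[K₀] K₀)
    {σ₀ : W₀ ≃+* W₀} (τ : N₀ →ₛₗ[(σ₀ : W₀ →+* W₀)] N₀) (M₀ : Submodule W₀ N₀) : Prop :=
  IsLattice (K₀ := K₀) M₀ ∧
  smulLat (p : W₀) (dualLat form M₀) ≤ M₀ ∧
  SubIdx M₀ (dualLat form M₀) 2 ∧
  smulLat (p : W₀) (mapLat τ (dualLat form M₀)) ≤ M₀ ∧
  SubIdx M₀ (mapLat τ (dualLat form M₀)) 2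

/-- A web pair `(S₀, T₀)` for an admissible lattice `M₀`:
`pM₀^∨ ⊂¹ S₀ ⊂¹ M₀ ⊂¹ T₀ ⊂¹ M₀^∨`, `pτ(T₀^∨) ⊆ S₀ ⊆ τ(T₀^∨)` and
`pτ(S₀^∨) ⊆ T₀ ⊆ τ(S₀^∨)`.  Web pairs for `M₀` are the points of the fiber over `M₀`
of the projection from Iwahori level `ℳ_Iw(𝔽)` to `ℳ(𝔽)`. -/
def IsWebPair (p : ℕ) (form : N₀ →ₗ[K₀] N₀ →ₗ[K₀] K₀)
    {σ₀ : W₀ ≃+* W₀} (τ : N₀ →ₛₗ[(σ₀ : W₀ →+* W₀)] N₀)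
    (M₀ S₀ T₀ : Submodule W₀ N₀) : Prop :=
  IsLattice (K₀ := K₀) S₀ ∧ IsLattice (K₀ := K₀) T₀ ∧
  SubIdx (smulLat (p : W₀) (dualLat form M₀)) S₀ 1 ∧
  SubIdx S₀ M₀ 1 ∧ SubIdx M₀ T₀ 1 ∧ SubIdx T₀ (dualLat form M₀) 1 ∧
  smulLat (p : W₀) (mapLat τ (dualLat form T₀)) ≤ S₀ ∧
  S₀ ≤ mapLat τ (dualLat form T₀) ∧
  smulLat (p : W₀) (mapLat τ (dualLat form S₀)) ≤ T₀ ∧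
  T₀ ≤ mapLat τ (dualLat form S₀)


section Aux

variable {N₀' : Type*} [AddCommGroup N₀'] [Module W₀ N₀']

lemma mem_smulLat {c : W₀} {A : Submodule W₀ N₀'} {x : N₀'} :
    x ∈ smulLat c A ↔ ∃ m ∈ A, c • m = x := Iff.rfl

lemma smulLat_le_iff {c : W₀} {A B : Submodule W₀ N₀'} :
    smulLat c A ≤ B ↔ ∀ m ∈ A, c • m ∈ B := by
  constructor
  · intro h m hm; exact h ⟨m, hm, rfl⟩
  · rintro h x ⟨m, hm, rfl⟩; exact h m hm

lemma smulLat_mono {c : W₀} {A B : Submodule W₀ N₀'} (h : A ≤ B) :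
    smulLat c A ≤ smulLat c B := by
  rintro x ⟨m, hm, rfl⟩; exact ⟨m, h hm, rfl⟩

variable {σ₀ : W₀ ≃+* W₀} {τ : N₀' →ₛₗ[(σ₀ : W₀ →+* W₀)] N₀'}

lemma mem_mapLat {A : Submodule W₀ N₀'} {x : N₀'} :
    x ∈ mapLat τ A ↔ ∃ m ∈ A, τ m = x := Iff.rfl

lemma mapLat_mono {A B : Submodule W₀ N₀'} (h : A ≤ B) : mapLat τ A ≤ mapLat τ B := by
  rintro x ⟨m, hm, rfl⟩; exact ⟨m, h hm, rfl⟩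

lemma mapLat_injective (hτ : Function.Injective τ) {A B : Submodule W₀ N₀'}
    (h : mapLat τ A = mapLat τ B) : A = B := by
  have : τ '' (A : Set N₀') = τ '' (B : Set N₀') := by
    have h1 : (mapLat τ A : Set N₀') = (mapLat τ B : Set N₀') := by rw [h]
    exact h1
  ext x
  constructor
  · intro hx
    have : τ x ∈ τ '' (B : Set N₀') := this ▸ ⟨x, hx, rfl⟩
    rcases this with ⟨y, hy, hxy⟩
    rwa [← hτ hxy]
  · intro hx
    have : τ x ∈ τ '' (A : Set N₀') := this.symm ▸ ⟨x, hx, rfl⟩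
    rcases this with ⟨y, hy, hxy⟩
    rwa [← hτ hxy]

lemma mapLat_smulLat (c : W₀) (A : Submodule W₀ N₀') :
    mapLat τ (smulLat c A) = smulLat (σ₀ c) (mapLat τ A) := by
  ext x
  constructor
  · rintro ⟨y, ⟨m, hm, rfl⟩, rfl⟩
    exact ⟨τ m, ⟨m, hm, rfl⟩, (τ.map_smulₛₗ c m).symm⟩
  · rintro ⟨y, ⟨m, hm, rfl⟩, rfl⟩
    exact ⟨c • m, ⟨m, hm, rfl⟩, τ.map_smulₛₗ c m⟩

/-! ### Length / Krull dimension lemmas -/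

lemma relLength_le_of_chains {A B : Submodule W₀ N₀'} {n : ℕ}
    (h : ∀ p : LTSeries (Set.Icc A B), p.length ≤ n) :
    relLength A B ≤ ((n : ℕ∞) : WithBot ℕ∞) := by
  rw [relLength, Order.krullDim]
  exact iSup_le fun p => by exact_mod_cast h p

lemma chain_le_relLength {A B : Submodule W₀ N₀'} (p : LTSeries (Set.Icc A B)) :
    ((p.length : ℕ∞) : WithBot ℕ∞) ≤ relLength A B := by
  have := Order.LTSeries.length_le_krullDim p
  exact_mod_cast this

lemma subIdx_two_ne {A B : Submodule W₀ N₀'} (h : SubIdx A B 2) : A ≠ B := by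
  rintro rfl
  have h0 : relLength A A ≤ ((0 : ℕ∞) : WithBot ℕ∞) := by
    apply relLength_le_of_chains
    intro p
    by_contra hl
    have hpos : 0 < p.length := Nat.pos_of_ne_zero fun e => hl (by omega)
    have hlt := p.strictMono (show (⟨0, by omega⟩ : Fin (p.length + 1)) < ⟨1, by omega⟩ by
      simp [Fin.lt_def])
    have he : ∀ x : Set.Icc A A, (x : Submodule W₀ N₀') = A := fun x =>
      le_antisymm x.2.2 x.2.1
    have : (p ⟨0, by omega⟩ : Submodule W₀ N₀') < (p ⟨1, by omega⟩ : Submodule W₀ N₀') := hlt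
    rw [he _, he _] at this
    exact lt_irrefl _ this
  rw [h.2] at h0
  exact absurd (by exact_mod_cast h0) (by norm_num)

lemma one_le_relLength {A B : Submodule W₀ N₀'} (h : A < B) :
    ((1 : ℕ∞) : WithBot ℕ∞) ≤ relLength A B := by
  let a : Set.Icc A B := ⟨A, le_rfl, h.le⟩
  let b : Set.Icc A B := ⟨B, h.le, le_rfl⟩
  have hab : a < b := by exact h
  have := chain_le_relLength ((RelSeries.singleton _ a).snoc b hab)
  exact_mod_cast this

lemma subIdx_split {A C B : Submodule W₀ N₀'} (h : SubIdx A B 2)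
    (h1 : A < C) (h2 : C < B) : SubIdx A C 1 ∧ SubIdx C B 1 := by
  have hub1 : relLength A C ≤ ((1 : ℕ∞) : WithBot ℕ∞) := by
    apply relLength_le_of_chains
    intro p
    let f : Set.Icc A C → Set.Icc A B := fun x => ⟨x.1, x.2.1, x.2.2.trans h2.le⟩
    have hf : StrictMono f := fun x y hxy => hxy
    have hlast : (p.map f hf).last < (⟨B, h1.le.trans h2.le, le_rfl⟩ : Set.Icc A B) := by
      have : ((p.map f hf).last : Submodule W₀ N₀') = (p.last : Submodule W₀ N₀') := rfl
      show ((p.map f hf).last : Submodule W₀ N₀') < B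
      rw [this]
      exact lt_of_le_of_lt p.last.2.2 h2
    have := chain_le_relLength (((p.map f hf)).snoc _ hlast)
    rw [h.2] at this
    have hlen : ((p.map f hf).snoc _ hlast).length = p.length + 1 := by
      simp [RelSeries.snoc, RelSeries.append, LTSeries.map]
    rw [hlen] at this
    have : p.length + 1 ≤ 2 := by exact_mod_cast this
    omega
  have hub2 : relLength C B ≤ ((1 : ℕ∞) : WithBot ℕ∞) := by
    apply relLength_le_of_chains
    intro p
    let f : Set.Icc C B → Set.Icc A B := fun x => ⟨x.1, h1.le.trans x.2.1, x.2.2⟩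
    have hf : StrictMono f := fun x y hxy => hxy
    have hhead : (⟨A, le_rfl, h1.le.trans h2.le⟩ : Set.Icc A B) < (p.map f hf).head := by
      show (A : Submodule W₀ N₀') < ((p.map f hf).head : Submodule W₀ N₀')
      exact lt_of_lt_of_le h1 p.head.2.1
    have := chain_le_relLength (((p.map f hf)).cons _ hhead)
    rw [h.2] at this
    have hlen : ((p.map f hf).cons _ hhead).length = p.length + 1 := by
      simp [RelSeries.cons, RelSeries.append, LTSeries.map, RelSeries.singleton]

    rw [hlen] at this
    have : p.length + 1 ≤ 2 := by exact_mod_cast this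
    omega
  exact ⟨⟨h1.le, le_antisymm hub1 (one_le_relLength h1)⟩,
    ⟨h2.le, le_antisymm hub2 (one_le_relLength h2)⟩⟩

end Aux

section AuxDual

variable {K₀ : Type*} [Field K₀] [Algebra W₀ K₀]
variable {N₀ : Type*} [AddCommGroup N₀] [Module K₀ N₀] [Module W₀ N₀] [IsScalarTower W₀ K₀ N₀]

lemma mem_dualLat {form : N₀ →ₗ[K₀] N₀ →ₗ[K₀] K₀} {A : Submodule W₀ N₀} {x : N₀} :
    x ∈ dualLat form A ↔ ∀ y ∈ A, form x y ∈ (algebraMap W₀ K₀).range := Iff.rfl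

lemma dualLat_antitone {form : N₀ →ₗ[K₀] N₀ →ₗ[K₀] K₀} {A B : Submodule W₀ N₀}
    (h : A ≤ B) : dualLat form B ≤ dualLat form A :=
  fun _ hx y hy => hx y (h hy)

lemma dualLat_eq_dualSubmodule (form : N₀ →ₗ[K₀] N₀ →ₗ[K₀] K₀) (A : Submodule W₀ N₀) :
    dualLat form A = LinearMap.BilinForm.dualSubmodule (R := W₀) form A := by
  ext x
  simp only [mem_dualLat, LinearMap.BilinForm.mem_dualSubmodule, Submodule.mem_one,
    RingHom.mem_range]

lemma dualSubmodule_flip_eq (form : N₀ →ₗ[K₀] N₀ →ₗ[K₀] K₀) (halt : ∀ x, form x x = 0)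
    (A : Submodule W₀ N₀) :
    LinearMap.BilinForm.dualSubmodule (R := W₀) form.flip A =
      LinearMap.BilinForm.dualSubmodule (R := W₀) form A := by
  have hskew : ∀ x y : N₀, form y x = -form x y := by
    intro x y
    have h0 := halt (x + y)
    simp only [map_add, LinearMap.add_apply, halt] at h0
    rw [zero_add, add_zero] at h0
    exact eq_neg_of_add_eq_zero_left h0
  ext x
  simp only [LinearMap.BilinForm.mem_dualSubmodule, LinearMap.flip_apply]
  constructor
  · intro h y hy
    have := (1 : Submodule W₀ K₀).neg_mem (h y hy)
    rwa [hskew x y, neg_neg] at this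
  · intro h y hy
    rw [hskew x y]
    exact (1 : Submodule W₀ K₀).neg_mem (h y hy)

variable [IsDomain W₀] [IsDiscreteValuationRing W₀] [IsFractionRing W₀ K₀]

set_option maxHeartbeats 1000000 in
lemma exists_latticeBasis {A : Submodule W₀ N₀} (hA : IsLattice (K₀ := K₀) A) :
    ∃ (ι : Type) (_ : Fintype ι) (b : Module.Basis ι K₀ N₀),
      A = Submodule.span W₀ (Set.range (b : ι → N₀)) := by
  haveI : NoZeroSMulDivisors W₀ N₀ := by
    refine ⟨fun {c x} h => ?_⟩
    rcases eq_or_ne c 0 with rfl | hc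
    · exact Or.inl rfl
    · right
      rw [← IsScalarTower.algebraMap_smul K₀ c x] at h
      have hc' : algebraMap W₀ K₀ c ≠ 0 := fun e =>
        hc (IsFractionRing.injective W₀ K₀ (by simpa using e))
      exact (smul_eq_zero.mp h).resolve_left hc'
  haveI : Module.Finite W₀ ↥A := Module.Finite.iff_fg.mpr hA.1
  haveI : Module.Free W₀ ↥A := Module.free_of_finite_type_torsion_free'
  let b0 := (Module.Free.chooseBasis W₀ ↥A).reindex
    (Fintype.equivFin (Module.Free.ChooseBasisIndex W₀ ↥A))
  have hli : LinearIndependent W₀ (A.subtype ∘ b0) :=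
    b0.linearIndependent.map' A.subtype (Submodule.ker_subtype A)
  have hliK : LinearIndependent K₀ (A.subtype ∘ b0) :=
    (LinearIndependent.iff_fractionRing W₀ K₀).mp hli
  have hspanW : Submodule.span W₀ (Set.range (A.subtype ∘ b0)) = A := by
    rw [Set.range_comp, ← Submodule.map_span, b0.span_eq, Submodule.map_top,
      Submodule.range_subtype]
  have hspanK : ⊤ ≤ Submodule.span K₀ (Set.range (A.subtype ∘ b0)) := by
    have h1 : Submodule.span K₀ (A : Set N₀) = ⊤ := hA.2
    rw [← hspanW, Submodule.span_span_of_tower] at h1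
    exact h1.ge
  refine ⟨_, inferInstance, Module.Basis.mk hliK hspanK, ?_⟩
  rw [Module.Basis.coe_mk, hspanW]

lemma fg_of_le_fg {A B : Submodule W₀ N₀} (hB : B.FG) (h : A ≤ B) : A.FG := by
  haveI : Module.Finite W₀ ↥B := Module.Finite.iff_fg.mpr hB
  have hfg : (Submodule.comap B.subtype A).FG := (isNoetherian_of_isNoetherianRing_of_finite W₀ ↥B).noetherian _
  have := hfg.map B.subtype
  rwa [Submodule.map_comap_subtype, inf_eq_right.mpr h] at this

lemma dualLat_span_dualBasis (form : N₀ →ₗ[K₀] N₀ →ₗ[K₀] K₀)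
    (hnd : LinearMap.BilinForm.Nondegenerate form) {ι : Type} [Fintype ι] [DecidableEq ι]
    (b : Module.Basis ι K₀ N₀) :
    dualLat form (Submodule.span W₀ (Set.range (b : ι → N₀))) =
      Submodule.span W₀ (Set.range ((LinearMap.BilinForm.dualBasis form hnd b) : ι → N₀)) := by
  classical
  rw [dualLat_eq_dualSubmodule]
  exact LinearMap.BilinForm.dualSubmodule_span_of_basis form hnd b

lemma dualLat_dualLat (form : N₀ →ₗ[K₀] N₀ →ₗ[K₀] K₀) (halt : ∀ x, form x x = 0)
    (hnd : LinearMap.BilinForm.Nondegenerate form) {A : Submodule W₀ N₀} (hA : IsLattice (K₀ := K₀) A) :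
    dualLat form (dualLat form A) = A := by
  obtain ⟨ι, _, b, rfl⟩ := exists_latticeBasis hA
  rw [dualLat_eq_dualSubmodule, dualLat_eq_dualSubmodule,
    ← dualSubmodule_flip_eq form halt]
  exact LinearMap.BilinForm.dualSubmodule_flip_dualSubmodule_of_basis form hnd b

lemma dualLat_isLattice (form : N₀ →ₗ[K₀] N₀ →ₗ[K₀] K₀)
    (hnd : LinearMap.BilinForm.Nondegenerate form) {A : Submodule W₀ N₀} (hA : IsLattice (K₀ := K₀) A) :
    IsLattice (K₀ := K₀) (dualLat form A) := by
  obtain ⟨ι, _, b, rfl⟩ := exists_latticeBasis hA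
  classical
  rw [dualLat_span_dualBasis form hnd b]
  constructor
  · exact Submodule.fg_span (Set.finite_range _)
  · rw [Submodule.span_span_of_tower]
    exact (LinearMap.BilinForm.dualBasis form hnd b).span_eq

end AuxDual

/-- Let `M₀` be admissible with `M₀ ≠ τ(M₀)` and both `M₀ + τ(M₀)`
and `M₀ ∩ τ(M₀)` τ-stable, and set `T₀ = M₀ + τ(M₀)` (so `M₀ ⊂¹ T₀ ⊂¹ M₀^∨`).
Then for every lattice `S₀` with `pM₀^∨ ⊂¹ S₀ ⊂¹ M₀` the pair `(S₀, T₀)` is a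
web pair for `M₀`. -/
theorem statement_12
    (p : ℕ) (hp : Nat.Prime p) (hp_odd : p ≠ 2)
    {W₀ : Type*} [CommRing W₀] [IsDomain W₀] [IsDiscreteValuationRing W₀]
    {K₀ : Type*} [Field K₀] [Algebra W₀ K₀] [IsFractionRing W₀ K₀]
    (hp_irr : Irreducible (p : W₀))
    (σ : K₀ ≃+* K₀) (σ₀ : W₀ ≃+* W₀)
    (hσ : ∀ c : W₀, algebraMap W₀ K₀ (σ₀ c) = σ (algebraMap W₀ K₀ c))
    {N₀ : Type*} [AddCommGroup N₀] [Module K₀ N₀] [Module W₀ N₀] [IsScalarTower W₀ K₀ N₀]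
    (hdim : Module.finrank K₀ N₀ = 4)
    (form : N₀ →ₗ[K₀] N₀ →ₗ[K₀] K₀)
    (halt : ∀ x, form x x = 0)
    (hnondeg : ∀ x, (∀ y, form x y = 0) → x = 0)
    (τ : N₀ →ₛₗ[(σ₀ : W₀ →+* W₀)] N₀)
    (hτ_bij : Function.Bijective τ)
    (hτ_semilinear : ∀ (a : K₀) (x : N₀), τ (a • x) = σ a • τ x)
    (hτ_form : ∀ x y, form (τ x) (τ y) = σ (form x y))
    (M₀ : Submodule W₀ N₀) (hM₀ : IsAdmissible p form τ M₀)
    (hne : M₀ ≠ mapLat τ M₀)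
    (h_sup_stable : mapLat τ (M₀ ⊔ mapLat τ M₀) = M₀ ⊔ mapLat τ M₀)
    (h_inf_stable : mapLat τ (M₀ ⊓ mapLat τ M₀) = M₀ ⊓ mapLat τ M₀) :
    (SubIdx M₀ (M₀ ⊔ mapLat τ M₀) 1 ∧ SubIdx (M₀ ⊔ mapLat τ M₀) (dualLat form M₀) 1) ∧
    ∀ S₀ : Submodule W₀ N₀,
      SubIdx (smulLat (p : W₀) (dualLat form M₀)) S₀ 1 → SubIdx S₀ M₀ 1 →
      IsWebPair p form τ M₀ S₀ (M₀ ⊔ mapLat τ M₀) := by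
  classical
  haveI : FiniteDimensional K₀ N₀ :=
    FiniteDimensional.of_finrank_pos (by rw [hdim]; norm_num)
  have hnd : LinearMap.BilinForm.Nondegenerate form := ⟨hnondeg, fun y hy => hnondeg y fun x => by
    have h0 := halt (x + y)
    simpa only [map_add, LinearMap.add_apply, halt, hy x, zero_add, add_zero] using h0⟩
  obtain ⟨hMlat, hpMv, hMMv, hpτMv, hMτMv⟩ := hM₀
  have hMle : M₀ ≤ dualLat form M₀ := hMMv.1
  have hMleτ : M₀ ≤ mapLat τ (dualLat form M₀) := hMτMv.1
  have hRmem : ∀ a : K₀, a ∈ (algebraMap W₀ K₀).range → σ a ∈ (algebraMap W₀ K₀).range := by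
    rintro a ⟨c, rfl⟩; exact ⟨σ₀ c, hσ c⟩
  have hRmem' : ∀ a : K₀, σ a ∈ (algebraMap W₀ K₀).range → a ∈ (algebraMap W₀ K₀).range := by
    rintro a ⟨c, hc⟩
    refine ⟨σ₀.symm c, σ.injective ?_⟩
    rw [← hσ (σ₀.symm c), RingEquiv.apply_symm_apply, hc]
  have hskew : ∀ x y : N₀, form x y = -form y x := by
    intro x y
    have h0 := halt (x + y)
    simp only [map_add, LinearMap.add_apply, halt] at h0
    rw [zero_add, add_zero] at h0
    exact eq_neg_of_add_eq_zero_right h0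
  have hMM : ∀ x ∈ M₀, ∀ y ∈ M₀, form x y ∈ (algebraMap W₀ K₀).range :=
    fun x hx y hy => mem_dualLat.mp (hMle hx) y hy
  have hMτM : ∀ x ∈ M₀, ∀ y ∈ M₀, form x (τ y) ∈ (algebraMap W₀ K₀).range := by
    intro x hx y hy
    obtain ⟨z, hz, rfl⟩ := hMleτ hx
    rw [hτ_form]
    exact hRmem _ (mem_dualLat.mp hz y hy)
  have hτMM : ∀ x ∈ M₀, ∀ y ∈ M₀, form (τ x) y ∈ (algebraMap W₀ K₀).range := by
    intro x hx y hy
    rw [hskew]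
    exact neg_mem (hMτM y hy x hx)
  have hττ : ∀ x ∈ M₀, ∀ y ∈ M₀, form (τ x) (τ y) ∈ (algebraMap W₀ K₀).range := by
    intro x hx y hy
    rw [hτ_form]
    exact hRmem _ (hMM x hx y hy)
  have hτM_le_Mv : mapLat τ M₀ ≤ dualLat form M₀ := by
    rintro x ⟨m, hm, rfl⟩
    exact mem_dualLat.mpr (fun y hy => hτMM m hm y hy)
  have hT_le_Mv : M₀ ⊔ mapLat τ M₀ ≤ dualLat form M₀ := sup_le hMle hτM_le_Mv
  have hT_pair : ∀ x ∈ M₀ ⊔ mapLat τ M₀, ∀ y ∈ M₀ ⊔ mapLat τ M₀,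
      form x y ∈ (algebraMap W₀ K₀).range := by
    intro x hx y hy
    obtain ⟨a, ha, b, hb, rfl⟩ := Submodule.mem_sup.mp hx
    obtain ⟨c, hc, d, hd, rfl⟩ := Submodule.mem_sup.mp hy
    obtain ⟨b', hb', rfl⟩ := hb
    obtain ⟨d', hd', rfl⟩ := hd
    simp only [map_add, LinearMap.add_apply]
    exact add_mem (add_mem (hMM a ha c hc) (hτMM b' hb' c hc))
      (add_mem (hMτM a ha d' hd') (hττ b' hb' d' hd'))
  have hM_le_dualT : M₀ ≤ dualLat form (M₀ ⊔ mapLat τ M₀) := by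
    intro x hx
    refine mem_dualLat.mpr fun y hy => ?_
    obtain ⟨c, hc, d, hd, rfl⟩ := Submodule.mem_sup.mp hy
    obtain ⟨d', hd', rfl⟩ := hd
    simp only [map_add]
    exact add_mem (hMM x hx c hc) (hMτM x hx d' hd')
  have hT_le_dualT : M₀ ⊔ mapLat τ M₀ ≤ dualLat form (M₀ ⊔ mapLat τ M₀) :=
    fun x hx => mem_dualLat.mpr (hT_pair x hx)
  have hrefl : dualLat form (dualLat form M₀) = M₀ := dualLat_dualLat form halt hnd hMlat
  have hMvlat : IsLattice (K₀ := K₀) (dualLat form M₀) := dualLat_isLattice form hnd hMlat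
  have hMneT : M₀ ≠ M₀ ⊔ mapLat τ M₀ := by
    intro h
    have hτleM : mapLat τ M₀ ≤ M₀ := le_sup_right.trans h.ge
    have hinf : M₀ ⊓ mapLat τ M₀ = mapLat τ M₀ := inf_eq_right.mpr hτleM
    rw [hinf] at h_inf_stable
    exact hne (mapLat_injective hτ_bij.1 h_inf_stable).symm
  have hTneMv : M₀ ⊔ mapLat τ M₀ ≠ dualLat form M₀ := by
    intro h
    have h1 : dualLat form M₀ ≤ M₀ := by
      have h2 := hT_le_dualT
      rw [h] at h2
      rwa [hrefl] at h2
    exact subIdx_two_ne hMMv (le_antisymm hMle h1)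
  have hMltT : M₀ < M₀ ⊔ mapLat τ M₀ := lt_of_le_of_ne le_sup_left hMneT
  have hTltMv : M₀ ⊔ mapLat τ M₀ < dualLat form M₀ := lt_of_le_of_ne hT_le_Mv hTneMv
  have hsplit := subIdx_split hMMv hMltT hTltMv
  refine ⟨hsplit, ?_⟩
  intro S h1 h2
  have hdualmap : ∀ A : Submodule W₀ N₀,
      mapLat τ (dualLat form A) = dualLat form (mapLat τ A) := by
    intro A
    ext x
    constructor
    · rintro ⟨z, hz, rfl⟩
      refine mem_dualLat.mpr ?_
      rintro y ⟨a, ha, rfl⟩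
      rw [hτ_form]
      exact hRmem _ (mem_dualLat.mp hz a ha)
    · intro hx
      obtain ⟨z, rfl⟩ := hτ_bij.2 x
      refine ⟨z, mem_dualLat.mpr fun a ha => ?_, rfl⟩
      apply hRmem'
      rw [← hτ_form]
      exact mem_dualLat.mp hx (τ a) ⟨a, ha, rfl⟩
  have hdualT : mapLat τ (dualLat form (M₀ ⊔ mapLat τ M₀)) =
      dualLat form (M₀ ⊔ mapLat τ M₀) := by
    rw [hdualmap, h_sup_stable]
  have hp0 : algebraMap W₀ K₀ ((p : ℕ) : W₀) ≠ 0 := by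
    rw [Ne, IsFractionRing.to_map_eq_zero_iff]
    exact hp_irr.ne_zero
  have hSlat : IsLattice (K₀ := K₀) S := by
    constructor
    · exact fg_of_le_fg hMlat.1 h2.1
    · apply eq_top_iff.mpr
      rw [← hMlat.2]
      apply Submodule.span_le.mpr
      intro x hx
      have hpx : ((p : ℕ) : W₀) • x ∈ S := h1.1 ⟨x, hMle hx, rfl⟩
      have hxe : x = (algebraMap W₀ K₀ ((p : ℕ) : W₀))⁻¹ • (((p : ℕ) : W₀) • x) := by
        rw [← IsScalarTower.algebraMap_smul K₀ (((p : ℕ) : W₀)) x, smul_smul,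
          inv_mul_cancel₀ hp0, one_smul]
      rw [hxe]
      exact Submodule.smul_mem _ _ (Submodule.subset_span hpx)
  have hTlat : IsLattice (K₀ := K₀) (M₀ ⊔ mapLat τ M₀) := by
    constructor
    · exact fg_of_le_fg hMvlat.1 hT_le_Mv
    · apply eq_top_iff.mpr
      rw [← hMlat.2]
      exact Submodule.span_mono (fun x hx => (le_sup_left : M₀ ≤ M₀ ⊔ mapLat τ M₀) hx)
  refine ⟨hSlat, hTlat, h1, h2, hsplit.1, hsplit.2, ?_, ?_, ?_, ?_⟩
  · rw [hdualT]
    exact le_trans (smulLat_mono (dualLat_antitone le_sup_left)) h1.1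
  · rw [hdualT]
    exact h2.1.trans hM_le_dualT
  · have hcomm : mapLat τ (smulLat ((p : ℕ) : W₀) (dualLat form S)) =
        smulLat ((p : ℕ) : W₀) (mapLat τ (dualLat form S)) := by
      rw [mapLat_smulLat, map_natCast]
    rw [← hcomm]
    have hpS : smulLat ((p : ℕ) : W₀) (dualLat form S) ≤ M₀ := by
      rw [← hrefl]
      rintro x ⟨m, hm, rfl⟩
      refine mem_dualLat.mpr fun y hy => ?_
      have hpy : ((p : ℕ) : W₀) • y ∈ S := h1.1 ⟨y, hy, rfl⟩
      have hfm := mem_dualLat.mp hm _ hpy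
      rw [← IsScalarTower.algebraMap_smul K₀ (((p : ℕ) : W₀)) y, map_smul] at hfm
      rw [← IsScalarTower.algebraMap_smul K₀ (((p : ℕ) : W₀)) m, map_smul,
        LinearMap.smul_apply]
      exact hfm
    exact (mapLat_mono hpS).trans le_sup_right
  · have hmono : mapLat τ (dualLat form M₀) ≤ mapLat τ (dualLat form S) :=
      mapLat_mono (dualLat_antitone h2.1)
    exact sup_le (hMleτ.trans hmono) ((mapLat_mono hMle).trans hmono)

end QURZ
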